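/- For every even natural number g \ge 2 the following four identities hold: 2 D_5(g,1) = 5^{g/2} f_{g-1} + f_{2g+1}; 2 D_5(g,2) = 5^{g/2} f_g + f_{2g}; 2 D_5(g,3) = 5^{g/2} f_g - f_{2g}; 2 D_5(g,4) = 5^{g/2} f_{g-1} - f_{2g+1}. -/

import Mathlib

/-- `binZ n j` is the binomial coefficient `n choose j` for `j : ℤ`, which is `0`
unless `0 ≤ j ≤ n`. -/
def binZ (n : ℕ) (j : ℤ) : ℤ := if 0 ≤ j then (n.choose j.toNat : ℤ) else 0

/-- `catC n j = C(n,j) = binom(n,j) - binom(n,j-1)`. -/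
def catC (n : ℕ) (j : ℤ) : ℤ := binZ n j - binZ n (j - 1)

/-- `dP p n k = d_p(n,k) = ∑_{s ∈ ℤ} C(n, (n+1-k)/2 + s p)` when `k ≡ n+1 (mod 2)`,
and `0` otherwise. -/
noncomputable def dP (p n k : ℕ) : ℤ :=
  if k % 2 = (n + 1) % 2 then ∑ᶠ s : ℤ, catC n (((n : ℤ) + 1 - k) / 2 + s * p) else 0


/-- `DP p g k = D_p(g,k) = ∑_{n=0}^{g} 2^{g-n} (g choose n) d_p(n,k)`. -/
noncomputable def DP (p g k : ℕ) : ℤ :=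
  ∑ n ∈ Finset.range (g + 1), 2 ^ (g - n) * (g.choose n : ℤ) * dP p n k

lemma binZ_eq_zero {n : ℕ} {j : ℤ} (h : j < 0 ∨ (n:ℤ) < j) : binZ n j = 0 := by
  rcases h with h | h
  · simp [binZ, not_le.2 h]
  · have h0 : 0 ≤ j := le_trans (Int.natCast_nonneg n) h.le
    have : n < j.toNat := by omega
    simp [binZ, h0, Nat.choose_eq_zero_of_lt this]

lemma catC_eq_zero {n : ℕ} {j : ℤ} (h : j < 0 ∨ (n:ℤ) + 1 < j) : catC n j = 0 := by
  rcases h with h | h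
  · rw [catC, binZ_eq_zero (Or.inl h), binZ_eq_zero (Or.inl (by omega)), sub_zero]
  · rw [catC, binZ_eq_zero (Or.inr (by omega)), binZ_eq_zero (Or.inr (by omega)), sub_zero]

lemma binZ_pascal (n : ℕ) (j : ℤ) : binZ (n+1) j = binZ n j + binZ n (j-1) := by
  rcases lt_trichotomy j 0 with h | h | h
  · rw [binZ_eq_zero (Or.inl h), binZ_eq_zero (Or.inl h), binZ_eq_zero (Or.inl (by omega))]
    ring
  · subst h
    simp [binZ, show ¬ ((0:ℤ)-1 ≥ 0) by omega]
  · have h0 : 0 ≤ j := h.le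
    have h1 : 0 ≤ j - 1 := by omega
    have hj : j.toNat = (j-1).toNat + 1 := by omega
    simp only [binZ, if_pos h0, if_pos h1, hj]
    rw [Nat.choose_succ_succ']
    push_cast
    ring

lemma catC_pascal (n : ℕ) (j : ℤ) : catC (n+1) j = catC n j + catC n (j-1) := by
  simp only [catC, binZ_pascal]; ring

lemma binZ_symm (n : ℕ) (j : ℤ) : binZ n ((n:ℤ) - j) = binZ n j := by
  rcases lt_trichotomy j 0 with h | h | h
  · rw [binZ_eq_zero (Or.inl h), binZ_eq_zero (Or.inr (by omega))]
  · subst h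
    simp only [binZ, sub_zero, if_pos (Int.natCast_nonneg n), if_pos (le_refl (0:ℤ))]
    norm_num [Nat.choose_symm (le_refl n)]
  · rcases le_or_gt j n with h2 | h2
    · have h3 : 0 ≤ (n:ℤ) - j := by omega
      have h4 : ((n:ℤ) - j).toNat = n - j.toNat := by omega
      have h5 : j.toNat ≤ n := by omega
      simp only [binZ, if_pos h3, if_pos h.le, h4]
      rw [Nat.choose_symm h5]
    · rw [binZ_eq_zero (Or.inl (by omega)), binZ_eq_zero (Or.inr h2)]

lemma catC_antisym (n : ℕ) (j : ℤ) : catC n ((n:ℤ) + 1 - j) = - catC n j := by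
  have h1 : (n:ℤ) + 1 - j - 1 = (n:ℤ) - j := by ring
  have h2 : (n:ℤ) + 1 - j = (n:ℤ) - (j-1) := by ring
  rw [catC, catC, h1, h2, binZ_symm, binZ_symm]
  ring

lemma support_fin (n : ℕ) (r : ℤ) :
    (Function.support fun s : ℤ => catC n (r + s * 5)).Finite := by
  apply Set.Finite.subset (Set.finite_Icc (-((r.natAbs : ℤ) + n + 1)) ((r.natAbs : ℤ) + n + 1))
  intro s hs
  simp only [Function.mem_support] at hs
  by_contra hmem
  simp only [Set.mem_Icc, not_and_or, not_le] at hmem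
  exact hs (catC_eq_zero (by omega))

lemma finsum_int_eq_zero (f : ℤ → ℤ) (c : ℤ) (h : ∀ s, f (c - s) = - f s) :
    (∑ᶠ s, f s) = 0 := by
  have h1 : (∑ᶠ s, f s) = ∑ᶠ s, f ((Equiv.subLeft c) s) :=
    (finsum_comp_equiv (Equiv.subLeft c)).symm
  have h2 : (∑ᶠ s, f ((Equiv.subLeft c) s)) = ∑ᶠ s, - f s :=
    finsum_congr fun s => by rw [Equiv.subLeft_apply]; exact h s
  have h3 : (∑ᶠ s : ℤ, - f s) = - ∑ᶠ s, f s := finsum_neg_distrib f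
  linarith

lemma dP_rec (n k : ℕ) : dP 5 (n + 1) (k + 1) = dP 5 n k + dP 5 n (k + 2) := by
  by_cases hk : (k + 1) % 2 = (n + 1 + 1) % 2
  · have hk2 : k % 2 = (n + 1) % 2 := by omega
    have hk3 : (k + 2) % 2 = (n + 1) % 2 := by omega
    simp only [dP, if_pos hk, if_pos hk2, if_pos hk3]
    push_cast
    have e1 : ((n : ℤ) + 1 + 1 - (k + 1)) / 2 = ((n : ℤ) + 1 - k) / 2 := by omega
    have e2 : ((n : ℤ) + 1 - (k + 2)) / 2 = ((n : ℤ) + 1 - k) / 2 - 1 := by omega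
    simp only [e1, e2]
    rw [← finsum_add_distrib (support_fin n _) (support_fin n _)]
    refine finsum_congr fun s => ?_
    rw [catC_pascal]
    congr 1
    congr 1
    ring
  · have hk2 : ¬ (k % 2 = (n + 1) % 2) := by omega
    have hk3 : ¬ ((k + 2) % 2 = (n + 1) % 2) := by omega
    simp only [dP, if_neg hk, if_neg hk2, if_neg hk3]
    ring

lemma dP_zero (n : ℕ) : dP 5 n 0 = 0 := by
  by_cases h : 0 % 2 = (n + 1) % 2
  · simp only [dP, if_pos h]
    refine finsum_int_eq_zero _ 0 fun s => ?_
    have e : ((n : ℤ) + 1 - ((0:ℕ):ℤ)) / 2 + (0 - s) * ((5:ℕ):ℤ)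
        = (n : ℤ) + 1 - (((n : ℤ) + 1 - ((0:ℕ):ℤ)) / 2 + s * ((5:ℕ):ℤ)) := by
      push_cast; omega
    rw [e, catC_antisym]
  · simp only [dP, if_neg h]

lemma dP_five (n : ℕ) : dP 5 n 5 = 0 := by
  by_cases h : 5 % 2 = (n + 1) % 2
  · simp only [dP, if_pos h]
    refine finsum_int_eq_zero _ 1 fun s => ?_
    have e : ((n : ℤ) + 1 - ((5:ℕ):ℤ)) / 2 + (1 - s) * ((5:ℕ):ℤ)
        = (n : ℤ) + 1 - (((n : ℤ) + 1 - ((5:ℕ):ℤ)) / 2 + s * ((5:ℕ):ℤ)) := by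
      push_cast; omega
    rw [e, catC_antisym]
  · simp only [dP, if_neg h]

lemma dP_01 : dP 5 0 1 = 1 := by
  simp only [dP, if_pos rfl]
  rw [finsum_eq_single _ 0 (fun x hx => catC_eq_zero (by omega))]
  norm_num [catC, binZ]

lemma dP_03 : dP 5 0 3 = 0 := by
  simp only [dP, if_pos rfl]
  exact finsum_eq_zero_of_forall_eq_zero fun s => catC_eq_zero (by omega)

lemma dP_02 : dP 5 0 2 = 0 := by simp [dP]
lemma dP_04 : dP 5 0 4 = 0 := by simp [dP]

lemma DP_zero (g : ℕ) : DP 5 g 0 = 0 := by simp [DP, dP_zero]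
lemma DP_five5 (g : ℕ) : DP 5 g 5 = 0 := by simp [DP, dP_five]
lemma DP_at0 (k : ℕ) : DP 5 0 k = dP 5 0 k := by simp [DP]

lemma DP_rec (g k : ℕ) :
    DP 5 (g + 1) (k + 1) = 2 * DP 5 g (k + 1) + DP 5 g k + DP 5 g (k + 2) := by
  have h1 : DP 5 (g + 1) (k + 1)
      = (∑ m ∈ Finset.range (g + 1),
          2 ^ (g - m) * ((g.choose m : ℤ) + (g.choose (m + 1) : ℤ))
            * (dP 5 m k + dP 5 m (k + 2)))
        + 2 ^ (g + 1) * dP 5 0 (k + 1) := by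
    rw [DP, Finset.sum_range_succ']
    congr 1
    · refine Finset.sum_congr rfl fun m _ => ?_
      rw [dP_rec]
      have e1 : g + 1 - (m + 1) = g - m := by omega
      have hc : (((g + 1).choose (m + 1) : ℕ) : ℤ) = (g.choose m : ℤ) + g.choose (m + 1) := by
        rw [Nat.choose_succ_succ]; push_cast; ring
      rw [e1, hc]
    · simp
  have h2 : 2 * DP 5 g (k + 1)
      = (∑ m ∈ Finset.range (g + 1),
          2 ^ (g - m) * ((g.choose (m + 1) : ℕ) : ℤ) * (dP 5 m k + dP 5 m (k + 2)))
        + 2 ^ (g + 1) * dP 5 0 (k + 1) := by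
    have e : 2 * DP 5 g (k + 1)
        = ∑ n ∈ Finset.range (g + 1), 2 ^ (g + 1 - n) * (g.choose n : ℤ) * dP 5 n (k + 1) := by
      rw [DP, Finset.mul_sum]
      refine Finset.sum_congr rfl fun n hn => ?_
      have hn' : n ≤ g := by
        simpa [Nat.lt_succ_iff] using hn
      have e2 : g + 1 - n = (g - n) + 1 := by omega
      rw [e2, pow_succ]
      ring
    rw [e, Finset.sum_range_succ']
    congr 1
    · rw [Finset.sum_range_succ]
      have hz : ((g.choose (g + 1) : ℕ) : ℤ) = 0 := by
        simp [Nat.choose_eq_zero_of_lt]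
      rw [hz]
      rw [mul_zero, zero_mul, add_zero]
      refine Finset.sum_congr rfl fun i _ => ?_
      rw [dP_rec]
      have e1 : g + 1 - (i + 1) = g - i := by omega
      rw [e1]
    · simp
  have h3 : DP 5 g k + DP 5 g (k + 2)
      = ∑ m ∈ Finset.range (g + 1),
          2 ^ (g - m) * (g.choose m : ℤ) * (dP 5 m k + dP 5 m (k + 2)) := by
    rw [DP, DP, ← Finset.sum_add_distrib]
    exact Finset.sum_congr rfl fun m _ => by ring
  have h4 : (∑ m ∈ Finset.range (g + 1),
          2 ^ (g - m) * ((g.choose m : ℤ) + (g.choose (m + 1) : ℤ))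
            * (dP 5 m k + dP 5 m (k + 2)))
      = (∑ m ∈ Finset.range (g + 1),
          2 ^ (g - m) * (g.choose m : ℤ) * (dP 5 m k + dP 5 m (k + 2)))
        + ∑ m ∈ Finset.range (g + 1),
            2 ^ (g - m) * ((g.choose (m + 1) : ℕ) : ℤ) * (dP 5 m k + dP 5 m (k + 2)) := by
    rw [← Finset.sum_add_distrib]
    exact Finset.sum_congr rfl fun m _ => by ring
  linarith [h1, h2, h3, h4]

lemma DP2 : DP 5 2 1 = 5 ∧ DP 5 2 2 = 4 ∧ DP 5 2 3 = 1 ∧ DP 5 2 4 = 0 := by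
  have r00 := DP_rec 0 0
  have r01 := DP_rec 0 1
  have r02 := DP_rec 0 2
  have r03 := DP_rec 0 3
  have r10 := DP_rec 1 0
  have r11 := DP_rec 1 1
  have r12 := DP_rec 1 2
  have r13 := DP_rec 1 3
  norm_num [DP_at0, DP_zero, DP_five5, dP_01, dP_02, dP_03, dP_04, dP_zero, dP_five]
    at r00 r01 r02 r03 r10 r11 r12 r13
  refine ⟨by linarith, by linarith, by linarith, by linarith⟩

lemma key (m : ℕ) :
    2 * DP 5 (2*m+2) 1 = 5^(m+1) * (Nat.fib (2*m+1) : ℤ) + (Nat.fib (4*m+5) : ℤ) ∧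
    2 * DP 5 (2*m+2) 2 = 5^(m+1) * (Nat.fib (2*m+2) : ℤ) + (Nat.fib (4*m+4) : ℤ) ∧
    2 * DP 5 (2*m+2) 3 = 5^(m+1) * (Nat.fib (2*m+2) : ℤ) - (Nat.fib (4*m+4) : ℤ) ∧
    2 * DP 5 (2*m+2) 4 = 5^(m+1) * (Nat.fib (2*m+1) : ℤ) - (Nat.fib (4*m+5) : ℤ) := by
  induction m with
  | zero =>
    obtain ⟨h1, h2, h3, h4⟩ := DP2
    norm_num [h1, h2, h3, h4, show Nat.fib 1 = 1 by decide, show Nat.fib 2 = 1 by decide,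
      show Nat.fib 4 = 3 by decide, show Nat.fib 5 = 5 by decide]
  | succ m ih =>
    obtain ⟨ih1, ih2, ih3, ih4⟩ := ih
    have q1 := DP_rec (2*m+2) 0
    have q2 := DP_rec (2*m+2) 1
    have q3 := DP_rec (2*m+2) 2
    have q4 := DP_rec (2*m+2) 3
    have p1 := DP_rec (2*m+2+1) 0
    have p2 := DP_rec (2*m+2+1) 1
    have p3 := DP_rec (2*m+2+1) 2
    have p4 := DP_rec (2*m+2+1) 3
    simp only [Nat.reduceAdd, DP_zero, DP_five5] at q1 q2 q3 q4 p1 p2 p3 p4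
    -- Fibonacci facts
    have nf1 := Nat.fib_add_two (n := 2*m+1)
    have nf2 := Nat.fib_add_two (n := 2*m+2)
    simp only [show 2*m+1+2 = 2*m+2+1 from by ring, show 2*m+1+1 = 2*m+2 from by ring] at nf1
    simp only [show 2*m+2+2 = 2*m+2+1+1 from by ring] at nf2
    have n4 := Nat.fib_add_two (n := 4*m+4)
    have n5 := Nat.fib_add_two (n := 4*m+5)
    have n6 := Nat.fib_add_two (n := 4*m+6)
    have n7 := Nat.fib_add_two (n := 4*m+7)
    simp only [show 4*m+4+2 = 4*m+6 from by ring, show 4*m+4+1 = 4*m+5 from by ring] at n4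
    simp only [show 4*m+5+2 = 4*m+7 from by ring, show 4*m+5+1 = 4*m+6 from by ring] at n5
    simp only [show 4*m+6+2 = 4*m+8 from by ring, show 4*m+6+1 = 4*m+7 from by ring] at n6
    simp only [show 4*m+7+2 = 4*m+9 from by ring, show 4*m+7+1 = 4*m+8 from by ring] at n7
    have fz1 : (Nat.fib (2*m+2+1) : ℤ) = Nat.fib (2*m+1) + Nat.fib (2*m+2) := by
      exact_mod_cast nf1
    have fz2 : (Nat.fib (2*m+2+1+1) : ℤ) = Nat.fib (2*m+1) + 2 * Nat.fib (2*m+2) := by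
      have : Nat.fib (2*m+2+1+1) = Nat.fib (2*m+1) + 2 * Nat.fib (2*m+2) := by omega
      exact_mod_cast this
    have fzA : (Nat.fib (4*m+8) : ℤ) = 2 * Nat.fib (4*m+4) + 3 * Nat.fib (4*m+5) := by
      have : Nat.fib (4*m+8) = 2 * Nat.fib (4*m+4) + 3 * Nat.fib (4*m+5) := by omega
      exact_mod_cast this
    have fzB : (Nat.fib (4*m+9) : ℤ) = 3 * Nat.fib (4*m+4) + 5 * Nat.fib (4*m+5) := by
      have : Nat.fib (4*m+9) = 3 * Nat.fib (4*m+4) + 5 * Nat.fib (4*m+5) := by omega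
      exact_mod_cast this
    rw [show 2*(m+1)+2 = 2*m+2+1+1 from by ring, show 2*(m+1)+1 = 2*m+2+1 from by ring,
      show 4*(m+1)+4 = 4*m+8 from by ring, show 4*(m+1)+5 = 4*m+9 from by ring]
    refine ⟨?_, ?_, ?_, ?_⟩
    · linear_combination 2*p1 + 4*q1 + 2*q2 + 5*ih1 + 4*ih2 + ih3
        - 5*(5:ℤ)^(m+1)*fz1 - fzB
    · linear_combination 2*p2 + 2*q1 + 4*q2 + 2*q3 + 4*ih1 + 6*ih2 + 4*ih3 + ih4
        - 5*(5:ℤ)^(m+1)*fz2 - fzA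
    · linear_combination 2*p3 + 2*q2 + 4*q3 + 2*q4 + ih1 + 4*ih2 + 6*ih3 + 4*ih4
        - 5*(5:ℤ)^(m+1)*fz2 + fzA
    · linear_combination 2*p4 + 2*q3 + 4*q4 + ih2 + 4*ih3 + 5*ih4
        - 5*(5:ℤ)^(m+1)*fz1 + fzB

/-- For every even `g ≥ 2`:
`2 D_5(g,1) = 5^{g/2} f_{g-1} + f_{2g+1}`, `2 D_5(g,2) = 5^{g/2} f_g + f_{2g}`,
`2 D_5(g,3) = 5^{g/2} f_g - f_{2g}`, `2 D_5(g,4) = 5^{g/2} f_{g-1} - f_{2g+1}`. -/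
theorem DP_five_even (g : ℕ) (hg : 2 ≤ g) (hge : Even g) :
    2 * DP 5 g 1 = 5 ^ (g / 2) * (Nat.fib (g - 1) : ℤ) + (Nat.fib (2 * g + 1) : ℤ) ∧
    2 * DP 5 g 2 = 5 ^ (g / 2) * (Nat.fib g : ℤ) + (Nat.fib (2 * g) : ℤ) ∧
    2 * DP 5 g 3 = 5 ^ (g / 2) * (Nat.fib g : ℤ) - (Nat.fib (2 * g) : ℤ) ∧
    2 * DP 5 g 4 = 5 ^ (g / 2) * (Nat.fib (g - 1) : ℤ) - (Nat.fib (2 * g + 1) : ℤ) := by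
  obtain ⟨c, hc⟩ := hge
  obtain ⟨m, hm⟩ : ∃ m, g = 2*m+2 := ⟨c - 1, by omega⟩
  subst hm
  have hdiv : (2*m+2)/2 = m+1 := by omega
  have h1 : 2*m+2-1 = 2*m+1 := by omega
  have h2 : 2*(2*m+2)+1 = 4*m+5 := by ring
  have h3 : 2*(2*m+2) = 4*m+4 := by ring
  rw [hdiv, h1, h2, h3]
  exact key m
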